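/- For every integer n ≥ 4, every transposition in Sym(n) is a product of two derangements. -/

import Mathlib

theorem swap_eq_product_of_two_derangements (n : ℕ) (hn : 4 ≤ n)
    (τ : Equiv.Perm (Fin n)) (hτ : τ.IsSwap) :
    ∃ d₁ d₂ : Equiv.Perm (Fin n),
      (∀ x, d₁ x ≠ x) ∧ (∀ x, d₂ x ≠ x) ∧ τ = d₁ * d₂ := by
  obtain ⟨m, rfl⟩ : ∃ m, n = m + 4 := ⟨n - 4, by omega⟩
  obtain ⟨a, b, hab, rfl⟩ := hτ
  have v1 : (1 : Fin (m + 4)).val = 1 := rfl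
  have v2 : (2 : Fin (m + 4)).val = 2 := rfl
  have v3 : (3 : Fin (m + 4)).val = 3 := rfl
  have h10 : (1 : Fin (m + 4)) ≠ 0 := by
    intro h; have := congrArg Fin.val h; rw [v1] at this; simp at this
  have h20 : (2 : Fin (m + 4)) ≠ 0 := by
    intro h; have := congrArg Fin.val h; rw [v2] at this; simp at this
  have h30 : (3 : Fin (m + 4)) ≠ 0 := by
    intro h; have := congrArg Fin.val h; rw [v3] at this; simp at this
  have h12 : (1 : Fin (m + 4)) ≠ 2 := by
    intro h; have := congrArg Fin.val h; rw [v1, v2] at this; simp at this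
  have key : ∃ k : Fin (m + 4), k ≠ 0 ∧ a ≠ b + k ∧ b ≠ a + k := by
    by_cases h1 : b = a + 1 ∨ a = b + 1
    · refine ⟨2, h20, ?_, ?_⟩
      · rcases h1 with h | h
        · subst h
          intro h2
          rw [add_assoc] at h2
          have : (1 + 2 : Fin (m + 4)) = 3 := Fin.ext (by rw [Fin.val_add, v1, v2, v3]; exact Nat.mod_eq_of_lt (by omega))
          rw [this] at h2
          exact h30 (left_eq_add.mp h2)
        · intro h2
          rw [h] at h2
          exact h12 (add_left_cancel h2)
      · rcases h1 with h | h
        · intro h2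
          rw [h] at h2
          exact h12 (add_left_cancel h2)
        · subst h
          intro h2
          rw [add_assoc] at h2
          have : (1 + 2 : Fin (m + 4)) = 3 := Fin.ext (by rw [Fin.val_add, v1, v2, v3]; exact Nat.mod_eq_of_lt (by omega))
          rw [this] at h2
          exact h30 (left_eq_add.mp h2)
    · push_neg at h1
      exact ⟨1, h10, fun h => h1.2 h, fun h => h1.1 h⟩
  obtain ⟨k, hk0, hka, hkb⟩ := key
  refine ⟨Equiv.swap a b * Equiv.addRight k, (Equiv.addRight k)⁻¹, ?_, ?_, by group⟩
  · intro x
    simp only [Equiv.Perm.coe_mul, Function.comp_apply, Equiv.coe_addRight]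
    by_cases h : x + k = a
    · rw [h, Equiv.swap_apply_left]
      intro hbx
      exact hka (by rw [hbx, ← h])
    · by_cases h' : x + k = b
      · rw [h', Equiv.swap_apply_right]
        intro hax
        exact hkb (by rw [hax, ← h'])
      · rw [Equiv.swap_apply_of_ne_of_ne h h']
        intro hxx
        exact hk0 (left_eq_add.mp hxx.symm)
  · intro x hxx
    have := congrArg (Equiv.addRight k) hxx
    rw [← Equiv.Perm.mul_apply, mul_inv_cancel, Equiv.Perm.one_apply, Equiv.coe_addRight] at this
    exact hk0 (left_eq_add.mp this)
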